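/- arXiv:2403.16992 — 2 statements merged into one kernel-verified Lean document; each statement's English description precedes it below -/
import Mathlib

section
/- For any real scalars $x$ and $\eta > 0$, the Laplace density value $\frac{1}{2\eta}\exp(-|x|/\eta)$ equals the integral over $s \in (0,\infty)$ of the product of a centered Gaussian density in $x$ with variance $s$ and an exponential density in $s$ with rate $1/(2\eta^2)$: $\frac{1}{2\eta}e^{-|x|/\eta} = \int_0^\infty \frac{1}{\sqrt{2\pi s}}e^{-x^2/(2s)} \cdot \frac{1}{2\eta^2}e^{-s/(2\eta^2)}\,ds$. -/
open MeasureTheory Real Set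

lemma glaisher_pos {a b : ℝ} (ha : 0 < a) (hb : 0 < b) :
    ∫ t in Set.Ioi (0:ℝ), Real.exp (-(a * t ^ 2 + b / t ^ 2)) =
      Real.sqrt (Real.pi / a) / 2 * Real.exp (-2 * Real.sqrt (a * b)) := by
  set c := Real.sqrt a with hc_def
  set d := Real.sqrt b with hd_def
  have hc : 0 < c := Real.sqrt_pos.mpr ha
  have hd : 0 < d := Real.sqrt_pos.mpr hb
  have hc2 : c ^ 2 = a := Real.sq_sqrt ha.le
  have hd2 : d ^ 2 = b := Real.sq_sqrt hb.le
  have hcd : c * d = Real.sqrt (a * b) := (Real.sqrt_mul ha.le b).symm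
  set E : ℝ → ℝ := fun t => Real.exp (-(a * t ^ 2 + b / t ^ 2)) with hE_def
  set u : ℝ → ℝ := fun t => c * t - d / t with hu_def
  -- derivative
  have hderiv : ∀ t ∈ Set.Ioi (0:ℝ), HasDerivWithinAt u (c + d / t ^ 2) (Set.Ioi 0) t := by
    intro t ht
    have ht' : t ≠ 0 := (mem_Ioi.mp ht).ne'
    have h1 : HasDerivAt (fun t : ℝ => c * t) c t := by
      simpa using (hasDerivAt_id t).const_mul c
    have h2 : HasDerivAt (fun t : ℝ => d / t) (d * (-(t ^ 2)⁻¹)) t := by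
      simpa [div_eq_mul_inv] using (hasDerivAt_inv ht').const_mul d
    have := h1.sub h2
    exact (this.congr_deriv (by ring)).hasDerivWithinAt
  have hinj : Set.InjOn u (Set.Ioi 0) := by
    apply StrictMonoOn.injOn
    intro s hs t ht hst
    have hs' : (0:ℝ) < s := hs
    have ht' : (0:ℝ) < t := ht
    have h1 : c * s < c * t := by nlinarith
    have h2 : d / t < d / s := by
      exact div_lt_div_of_pos_left hd hs' hst
    simp only [hu_def]
    linarith
  have himage : u '' Set.Ioi 0 = Set.univ := by
    ext y
    simp only [Set.mem_image, Set.mem_univ, iff_true]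
    set r := Real.sqrt (y ^ 2 + 4 * (c * d)) with hr_def
    have hr2 : r ^ 2 = y ^ 2 + 4 * (c * d) := Real.sq_sqrt (by nlinarith)
    have hry : -y < r := by
      have h1 : |y| < r := by
        rw [← Real.sqrt_sq_eq_abs]
        exact Real.sqrt_lt_sqrt (sq_nonneg y) (by nlinarith)
      calc -y ≤ |y| := neg_le_abs y
        _ < r := h1
    have h0 : 0 < y + r := by linarith
    have h0' : (0:ℝ) < 2 * c := by linarith
    have htpos : 0 < (y + r) / (2 * c) := div_pos h0 h0'
    refine ⟨(y + r) / (2 * c), htpos, ?_⟩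
    have ht : (y + r) / (2 * c) ≠ 0 := ne_of_gt htpos
    simp only [hu_def]
    have hypr : y + r ≠ 0 := ne_of_gt h0
    field_simp
    nlinarith [hr2]
  have key := integral_image_eq_integral_abs_deriv_smul measurableSet_Ioi hderiv hinj
      (fun y => Real.exp (-y ^ 2))
  rw [himage, Measure.restrict_univ] at key
  have hgauss : ∫ y : ℝ, Real.exp (-y ^ 2) = Real.sqrt Real.pi := by
    have := integral_gaussian 1
    simpa using this
  rw [hgauss] at key
  -- rewrite integrand
  have hkey2 : ∀ t ∈ Set.Ioi (0:ℝ),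
      |c + d / t ^ 2| • Real.exp (-(u t) ^ 2)
        = Real.exp (2 * Real.sqrt (a * b)) * ((c + d / t ^ 2) * E t) := by
    intro t ht
    have ht' : (0:ℝ) < t := ht
    have habs : |c + d / t ^ 2| = c + d / t ^ 2 := abs_of_pos (by positivity)
    have hexp : -(u t) ^ 2 = 2 * Real.sqrt (a * b) + -(a * t ^ 2 + b / t ^ 2) := by
      simp only [hu_def, ← hcd, ← hc2, ← hd2]
      field_simp
      rw [Real.sqrt_mul (by positivity), Real.sqrt_sq hc.le, Real.sqrt_sq hd.le]
      ring
    rw [smul_eq_mul, habs, hexp, Real.exp_add, hE_def]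
    ring
  rw [setIntegral_congr_fun measurableSet_Ioi hkey2, integral_const_mul] at key
  -- integrability
  have hIntAbs : IntegrableOn (fun t => |c + d / t ^ 2| • Real.exp (-(u t) ^ 2)) (Set.Ioi 0) := by
    apply (integrableOn_image_iff_integrableOn_abs_deriv_smul measurableSet_Ioi hderiv hinj
      (fun y => Real.exp (-y ^ 2))).mp
    rw [himage]
    have : Integrable (fun y : ℝ => Real.exp (-y ^ 2)) := by
      simpa using integrable_exp_neg_mul_sq (one_pos)
    exact this.integrableOn
  have hIntFull : IntegrableOn (fun t => (c + d / t ^ 2) * E t) (Set.Ioi 0) := by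
    have h := (hIntAbs.congr_fun hkey2 measurableSet_Ioi).const_mul
        (Real.exp (2 * Real.sqrt (a * b)))⁻¹
    apply IntegrableOn.congr_fun h _ measurableSet_Ioi
    intro t ht
    show (Real.exp (2 * Real.sqrt (a * b)))⁻¹ *
        (Real.exp (2 * Real.sqrt (a * b)) * ((c + d / t ^ 2) * E t)) = _
    rw [← mul_assoc, inv_mul_cancel₀ (Real.exp_ne_zero _), one_mul]
  have hEcont : ContinuousOn E (Set.Ioi 0) := by
    apply Real.continuous_exp.comp_continuousOn
    apply ContinuousOn.neg
    apply ContinuousOn.add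
    · exact (continuous_const.mul (continuous_pow 2)).continuousOn
    · exact continuousOn_const.div (continuous_pow 2).continuousOn
        (fun t ht => pow_ne_zero 2 (ne_of_gt ht))
  have hIntE : IntegrableOn E (Set.Ioi 0) := by
    apply Integrable.mono' ((integrable_exp_neg_mul_sq ha).integrableOn)
      (hEcont.aestronglyMeasurable measurableSet_Ioi)
    filter_upwards [ae_restrict_mem measurableSet_Ioi] with t ht
    have ht' : (0:ℝ) < t := ht
    rw [Real.norm_eq_abs, abs_of_pos (Real.exp_pos _)]
    apply Real.exp_le_exp.mpr
    have : 0 ≤ b / t ^ 2 := by positivity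
    nlinarith
  have hIntD : IntegrableOn (fun t => d / t ^ 2 * E t) (Set.Ioi 0) := by
    have h := hIntFull.sub (hIntE.const_mul c)
    apply IntegrableOn.congr_fun h _ measurableSet_Ioi
    intro t ht
    show (c + d / t ^ 2) * E t - c * E t = _
    ring
  -- second substitution
  set k := d / c with hk_def
  have hk : 0 < k := div_pos hd hc
  have hk2 : k ^ 2 = b / a := by
    rw [hk_def, div_pow, hc2, hd2]
  set φ : ℝ → ℝ := fun τ => k / τ with hφ_def
  have hφderiv : ∀ τ ∈ Set.Ioi (0:ℝ), HasDerivWithinAt φ (-(k / τ ^ 2)) (Set.Ioi 0) τ := by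
    intro τ hτ
    have hτ' : τ ≠ 0 := (mem_Ioi.mp hτ).ne'
    have : HasDerivAt φ (k * (-(τ ^ 2)⁻¹)) τ := by
      simpa [hφ_def, div_eq_mul_inv] using (hasDerivAt_inv hτ').const_mul k
    exact (this.congr_deriv (by ring)).hasDerivWithinAt
  have hφinj : Set.InjOn φ (Set.Ioi 0) := by
    intro s hs t ht h
    have hs' : (0:ℝ) < s := hs
    have ht' : (0:ℝ) < t := ht
    simp only [hφ_def] at h
    rw [div_eq_div_iff (ne_of_gt hs') (ne_of_gt ht')] at h
    exact (mul_left_cancel₀ (ne_of_gt hk) h).symm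
  have hφimage : φ '' Set.Ioi 0 = Set.Ioi 0 := by
    ext y
    simp only [Set.mem_image, Set.mem_Ioi]
    constructor
    · rintro ⟨t, ht, rfl⟩; exact div_pos hk ht
    · intro hy
      refine ⟨k / y, div_pos hk hy, ?_⟩
      show k / (k / y) = y
      rw [div_div_eq_mul_div, mul_comm, mul_div_assoc, div_self (ne_of_gt hk), mul_one]
  have keyC := integral_image_eq_integral_abs_deriv_smul measurableSet_Ioi hφderiv hφinj
      (fun t => d / t ^ 2 * E t)
  rw [hφimage] at keyC
  have keyC2 : ∫ τ in Set.Ioi (0:ℝ),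
      |(-(k / τ ^ 2))| • (d / (φ τ) ^ 2 * E (φ τ)) = ∫ τ in Set.Ioi (0:ℝ), c * E τ := by
    apply setIntegral_congr_fun measurableSet_Ioi
    intro τ hτ
    have hτ' : (0:ℝ) < τ := hτ
    show |(-(k / τ ^ 2))| • (d / (φ τ) ^ 2 * E (φ τ)) = c * E τ
    have hEφ : E (φ τ) = E τ := by
      simp only [hE_def, hφ_def]
      congr 1
      have h1 : a * (k / τ) ^ 2 = b / τ ^ 2 := by
        rw [div_pow, hk2]; field_simp; try ring
      have h2 : b / (k / τ) ^ 2 = a * τ ^ 2 := by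
        rw [div_pow, hk2]; field_simp; try ring
      rw [h1, h2]; ring
    have habs : |(-(k / τ ^ 2))| = k / τ ^ 2 := by
      rw [abs_neg, abs_of_pos (by positivity)]
    rw [smul_eq_mul, habs, hEφ]
    have : k / τ ^ 2 * (d / (φ τ) ^ 2) = c := by
      simp only [hφ_def]
      rw [div_pow]
      field_simp [hk_def]
      rw [hk_def, div_mul_cancel₀ d hc.ne']
    rw [← mul_assoc, this]
  rw [keyC2] at keyC
  -- combine
  have hsplit : ∫ t in Set.Ioi (0:ℝ), (c + d / t ^ 2) * E t
      = 2 * c * ∫ t in Set.Ioi (0:ℝ), E t := by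
    have h1 : ∀ t, (c + d / t ^ 2) * E t = c * E t + d / t ^ 2 * E t := fun t => by ring
    simp_rw [h1]
    rw [integral_add (hIntE.const_mul c) hIntD, keyC, integral_const_mul]
    ring
  rw [hsplit] at key
  have hexpne : Real.exp (2 * Real.sqrt (a * b)) ≠ 0 := Real.exp_ne_zero _
  have hsqrt : Real.sqrt (Real.pi / a) = Real.sqrt Real.pi / c := by
    rw [Real.sqrt_div Real.pi_pos.le]
  have h2 : (-2 : ℝ) * Real.sqrt (a * b) = -(2 * Real.sqrt (a * b)) := by ring
  rw [hsqrt, h2, Real.exp_neg]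
  field_simp
  linear_combination -key

lemma glaisher {a b : ℝ} (ha : 0 < a) (hb : 0 ≤ b) :
    ∫ t in Set.Ioi (0:ℝ), Real.exp (-(a * t ^ 2 + b / t ^ 2)) =
      Real.sqrt (Real.pi / a) / 2 * Real.exp (-2 * Real.sqrt (a * b)) := by
  rcases hb.eq_or_lt with h | h
  · simp only [← h, zero_div, add_zero, mul_zero, Real.sqrt_zero, neg_zero, Real.exp_zero,
      mul_one]
    have := integral_gaussian_Ioi a
    simp_rw [neg_mul] at this
    exact this
  · exact glaisher_pos ha h

theorem laplace_scale_mixture (x η : ℝ) (hη : 0 < η) :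
    (1 / (2 * η)) * Real.exp (-|x| / η) =
    ∫ s in Set.Ioi (0 : ℝ),
      (1 / Real.sqrt (2 * Real.pi * s)) * Real.exp (-x ^ 2 / (2 * s)) *
        ((1 / (2 * η ^ 2)) * Real.exp (-s / (2 * η ^ 2))) := by
  set a : ℝ := 1 / (2 * η ^ 2) with ha_def
  set b : ℝ := x ^ 2 / 2 with hb_def
  have ha : 0 < a := by positivity
  have hb : 0 ≤ b := by positivity
  set g : ℝ → ℝ := fun s =>
      (1 / Real.sqrt (2 * Real.pi * s)) * Real.exp (-x ^ 2 / (2 * s)) *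
        ((1 / (2 * η ^ 2)) * Real.exp (-s / (2 * η ^ 2))) with hg_def
  have hderiv : ∀ t ∈ Set.Ioi (0:ℝ), HasDerivWithinAt (fun t : ℝ => t ^ 2) (2 * t)
      (Set.Ioi 0) t := by
    intro t ht
    have := (hasDerivAt_pow 2 t).hasDerivWithinAt (s := Set.Ioi (0:ℝ))
    simpa using this
  have hinj : Set.InjOn (fun t : ℝ => t ^ 2) (Set.Ioi 0) := by
    have hmono : StrictMonoOn (fun t : ℝ => t ^ 2) (Set.Ioi 0) := by
      intro p hp q hq hpq
      have hp' : (0:ℝ) < p := hp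
      simp only
      nlinarith
    exact hmono.injOn
  have himage : (fun t : ℝ => t ^ 2) '' Set.Ioi 0 = Set.Ioi 0 := by
    ext y
    simp only [Set.mem_image, Set.mem_Ioi]
    constructor
    · rintro ⟨t, ht, rfl⟩; positivity
    · intro hy
      exact ⟨Real.sqrt y, Real.sqrt_pos.mpr hy, Real.sq_sqrt hy.le⟩
  have keyM := integral_image_eq_integral_abs_deriv_smul measurableSet_Ioi hderiv hinj g
  rw [himage] at keyM
  set C : ℝ := 2 / Real.sqrt (2 * Real.pi) * (1 / (2 * η ^ 2)) with hC_def
  have hs2π : (0:ℝ) < Real.sqrt (2 * Real.pi) := Real.sqrt_pos.mpr (by positivity)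
  have hpt : ∀ t ∈ Set.Ioi (0:ℝ),
      |2 * t| • g (t ^ 2) = C * Real.exp (-(a * t ^ 2 + b / t ^ 2)) := by
    intro t ht
    have ht' : (0:ℝ) < t := ht
    have hsq : Real.sqrt (2 * Real.pi * t ^ 2) = Real.sqrt (2 * Real.pi) * t := by
      rw [Real.sqrt_mul (by positivity), Real.sqrt_sq ht'.le]
    have habs : |2 * t| = 2 * t := abs_of_pos (by linarith)
    have hexp : Real.exp (-x ^ 2 / (2 * t ^ 2)) * Real.exp (-t ^ 2 / (2 * η ^ 2)) =
        Real.exp (-(a * t ^ 2 + b / t ^ 2)) := by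
      rw [← Real.exp_add]
      congr 1
      rw [ha_def, hb_def]
      field_simp
      ring
    rw [smul_eq_mul, habs, hg_def]
    simp only
    rw [hsq, ← hexp, hC_def]
    field_simp
  rw [setIntegral_congr_fun measurableSet_Ioi hpt, integral_const_mul, glaisher ha hb] at keyM
  rw [keyM]
  -- now compute constants
  have hab : Real.sqrt (a * b) = |x| / (2 * η) := by
    have h1 : a * b = x ^ 2 / (2 * η) ^ 2 := by
      rw [ha_def, hb_def, div_mul_div_comm, one_mul]
      congr 1
      ring
    rw [h1, Real.sqrt_div (sq_nonneg x), Real.sqrt_sq_eq_abs, Real.sqrt_sq (by positivity)]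
  have hpa : Real.sqrt (Real.pi / a) = Real.sqrt (2 * Real.pi) * η := by
    have h1 : Real.pi / a = 2 * Real.pi * η ^ 2 := by
      rw [ha_def, one_div, div_inv_eq_mul]
      ring
    rw [h1, Real.sqrt_mul (by positivity), Real.sqrt_sq hη.le]
  rw [hab, hpa]
  have hexp2 : (-2 : ℝ) * (|x| / (2 * η)) = -|x| / η := by
    field_simp
  rw [hexp2]
  rw [hC_def]
  field_simp
end

section
/- Let $F \in \mathbb{C}^{n\times n}$ be unitary, $g \in \mathbb{R}^n$, $y \in \mathbb{C}^n$, $\sigma > 0$, and set $F_2 = F D(g)$. Write $F_2^H y$ componentwise as $q_j e^{i\varphi_j}$ with $q_j \ge 0$. Then for every $\phi \in [-\pi,\pi)^n$, $\exp\left(-\frac{1}{\sigma^2}\|y - F_2 e^{i\phi}\|_2^2\right) = \exp\left(-\frac{1}{\sigma^2}(g^Tg + \|y\|_2^2)\right)\prod_{j=1}^n \exp\left(\frac{2q_j}{\sigma^2}\cos(\phi_j - \varphi_j)\right)$. In particular, the normalized density of $\phi$ proportional to $\exp(-\frac{1}{\sigma^2}\|y - F_2 e^{i\phi}\|_2^2)$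 on $[-\pi,\pi)^n$ factors as the product $\prod_{j=1}^n f_{vM}(\phi_j \mid \varphi_j, \frac{2}{\sigma^2}q_j)$ of von Mises densities. -/
open Matrix MeasureTheory

noncomputable def besselI0 (κ : ℝ) : ℝ :=
  (1 / Real.pi) * ∫ θ in (0 : ℝ)..Real.pi, Real.exp (κ * Real.cos θ)

noncomputable def vonMisesDensity (x μ κ : ℝ) : ℝ :=
  Real.exp (κ * Real.cos (x - μ)) / (2 * Real.pi * besselI0 κ)

lemma besselI0_pos (κ : ℝ) : 0 < besselI0 κ := by
  unfold besselI0
  have hπ := Real.pi_pos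
  have h : 0 < ∫ θ in (0:ℝ)..Real.pi, Real.exp (κ * Real.cos θ) := by
    apply intervalIntegral.intervalIntegral_pos_of_pos
    · exact (Continuous.intervalIntegrable (by continuity) _ _)
    · intro x; exact Real.exp_pos _
    · exact hπ
  positivity

lemma integral_Ico_vm (κ μ : ℝ) :
    ∫ x in Set.Ico (-Real.pi) Real.pi, Real.exp (κ * Real.cos (x - μ))
      = 2 * Real.pi * besselI0 κ := by
  have hπ := Real.pi_pos
  have hc : ∀ a b : ℝ, IntervalIntegrable (fun x => Real.exp (κ * Real.cos x)) volume a b :=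
    fun a b => (Continuous.intervalIntegrable (by continuity) a b)
  have h1 : ∫ x in Set.Ico (-Real.pi) Real.pi, Real.exp (κ * Real.cos (x - μ))
      = ∫ x in (-Real.pi)..Real.pi, Real.exp (κ * Real.cos (x - μ)) := by
    rw [intervalIntegral.integral_of_le (by linarith), MeasureTheory.integral_Ioc_eq_integral_Ioo,
      ← MeasureTheory.integral_Ico_eq_integral_Ioo]
  rw [h1]
  have hper : Function.Periodic (fun x => Real.exp (κ * Real.cos (x - μ))) (2 * Real.pi) := by
    intro x
    simp only
    rw [show x + 2 * Real.pi - μ = (x - μ) + 2 * Real.pi by ring, Real.cos_add_two_pi]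
  have h2 : ∫ x in (-Real.pi)..Real.pi, Real.exp (κ * Real.cos (x - μ))
      = ∫ x in (μ - Real.pi)..(μ + Real.pi), Real.exp (κ * Real.cos (x - μ)) := by
    have := hper.intervalIntegral_add_eq (-Real.pi) (μ - Real.pi)
    rw [show -Real.pi + 2*Real.pi = Real.pi by ring,
      show μ - Real.pi + 2*Real.pi = μ + Real.pi by ring] at this
    exact this
  rw [h2, intervalIntegral.integral_comp_sub_right (fun x => Real.exp (κ * Real.cos x)) μ,
    show μ - Real.pi - μ = -Real.pi by ring, show μ + Real.pi - μ = Real.pi by ring]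
  have h3 := intervalIntegral.integral_comp_neg (a := (0:ℝ)) (b := Real.pi)
    (f := fun x => Real.exp (κ * Real.cos x))
  simp only [Real.cos_neg, neg_zero] at h3
  have h4 := intervalIntegral.integral_add_adjacent_intervals (hc (-Real.pi) 0) (hc 0 Real.pi)
  rw [← h4, ← h3]
  unfold besselI0
  field_simp
  ring

theorem phase_posterior_vonMises_product (n : ℕ) (F : Matrix (Fin n) (Fin n) ℂ)
    (hF : F ∈ Matrix.unitaryGroup (Fin n) ℂ) (g : Fin n → ℝ) (y : Fin n → ℂ)
    (σ : ℝ) (hσ : 0 < σ)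
    (F₂ : Matrix (Fin n) (Fin n) ℂ)
    (hF₂ : F₂ = F * Matrix.diagonal (fun j => (g j : ℂ)))
    (q φv : Fin n → ℝ) (hq : ∀ j, 0 ≤ q j)
    (hqφ : ∀ j, F₂ᴴ.mulVec y j = (q j : ℂ) * Complex.exp (Complex.I * (φv j : ℂ))) :
    ∀ φ : Fin n → ℝ, (∀ j, φ j ∈ Set.Ico (-Real.pi) Real.pi) →
      (Real.exp (-(1 / σ ^ 2) *
          ∑ j, ‖y j - F₂.mulVec (fun i => Complex.exp (Complex.I * (φ i : ℂ))) j‖ ^ 2)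
        = Real.exp (-(1 / σ ^ 2) * ((∑ j, g j ^ 2) + ∑ j, ‖y j‖ ^ 2)) *
          ∏ j, Real.exp ((2 * q j / σ ^ 2) * Real.cos (φ j - φv j))) ∧
      (Real.exp (-(1 / σ ^ 2) *
          ∑ j, ‖y j - F₂.mulVec (fun i => Complex.exp (Complex.I * (φ i : ℂ))) j‖ ^ 2) /
        (∫ ψ in Set.univ.pi (fun _ : Fin n => Set.Ico (-Real.pi) Real.pi),
          Real.exp (-(1 / σ ^ 2) *
            ∑ j, ‖y j - F₂.mulVec (fun i => Complex.exp (Complex.I * (ψ i : ℂ))) j‖ ^ 2))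
        = ∏ j, vonMisesDensity (φ j) (φv j) (2 * q j / σ ^ 2)) := by
  have hσ2 : (σ:ℝ) ^ 2 ≠ 0 := pow_ne_zero 2 hσ.ne'
  have habs1 : ∀ x : ℝ, ‖Complex.exp (Complex.I * (x:ℂ))‖ = 1 := fun x => by
    rw [mul_comm]; exact Complex.norm_exp_ofReal_mul_I x
  -- unitary preserves the hermitian inner product
  have hFF : Fᴴ * F = 1 := by
    have := (Matrix.mem_unitaryGroup_iff').mp hF
    rwa [Matrix.star_eq_conjTranspose] at this
  have hU : ∀ v : Fin n → ℂ, star (F.mulVec v) ⬝ᵥ F.mulVec v = star v ⬝ᵥ v := by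
    intro v
    rw [Matrix.star_mulVec, Matrix.dotProduct_mulVec, Matrix.vecMul_vecMul, hFF,
      Matrix.vecMul_one]
  -- the key quadratic identity
  have key : ∀ φ : Fin n → ℝ,
      (∑ j, ‖y j - F₂.mulVec (fun i => Complex.exp (Complex.I * (φ i : ℂ))) j‖ ^ 2)
      = ((∑ j, g j ^ 2) + ∑ j, ‖y j‖ ^ 2)
        - 2 * ∑ j, q j * Real.cos (φ j - φv j) := by
    intro φ
    set e : Fin n → ℂ := fun i => Complex.exp (Complex.I * (φ i : ℂ)) with he
    set m : Fin n → ℂ := F₂.mulVec e with hm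
    have he1 : ∀ j, star (e j) * e j = 1 := by
      intro j
      rw [show star (e j) = (starRingEnd ℂ) (e j) from rfl,
        ← Complex.normSq_eq_conj_mul_self, Complex.normSq_eq_norm_sq, habs1]
      norm_num
    -- ∑ normSq (m j) = ∑ g j ^ 2
    have hstar : star m ⬝ᵥ m = ∑ j, ((g j : ℂ))^2 := by
      have hmv : m = F.mulVec (fun j => (g j : ℂ) * e j) := by
        rw [hm, hF₂, ← Matrix.mulVec_mulVec,
          show (Matrix.diagonal fun j => (g j : ℂ)) *ᵥ e = fun j => (g j : ℂ) * e j from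
            funext fun j => Matrix.mulVec_diagonal _ _ _]
      rw [hmv, hU]
      simp only [dotProduct, Pi.star_apply]
      refine Finset.sum_congr rfl fun j _ => ?_
      calc star ((g j : ℂ) * e j) * ((g j : ℂ) * e j)
          = ((g j : ℂ) * star ((g j : ℂ))) * (star (e j) * e j) := by
            rw [star_mul']; ring
        _ = (g j : ℂ)^2 := by
            rw [he1 j, show star ((g j : ℂ)) = (g j : ℂ) by simp]
            ring
    have hB : (∑ j, Complex.normSq (m j)) = ∑ j, g j ^ 2 := by
      have h1 : star m ⬝ᵥ m = ∑ j, (Complex.normSq (m j) : ℂ) := by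
        simp only [dotProduct, Pi.star_apply]
        refine Finset.sum_congr rfl fun j _ => ?_
        rw [show star (m j) = (starRingEnd ℂ) (m j) from rfl,
          ← Complex.normSq_eq_conj_mul_self]
      rw [h1] at hstar
      have : ((∑ j, Complex.normSq (m j) : ℝ) : ℂ) = ((∑ j, g j ^ 2 : ℝ) : ℂ) := by
        push_cast
        exact hstar
      exact_mod_cast this
    -- cross term
    have hd : star y ⬝ᵥ m = star (F₂ᴴ.mulVec y) ⬝ᵥ e := by
      rw [hm, Matrix.dotProduct_mulVec, Matrix.star_mulVec, Matrix.conjTranspose_conjTranspose]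
    have hdv : star (F₂ᴴ.mulVec y) ⬝ᵥ e
        = ∑ j, (q j : ℂ) * Complex.exp (Complex.I * ((φ j : ℂ) - (φv j : ℂ))) := by
      simp only [dotProduct, Pi.star_apply, hqφ]
      refine Finset.sum_congr rfl fun j _ => ?_
      have hst : star ((q j : ℂ) * Complex.exp (Complex.I * (φv j : ℂ)))
          = (q j : ℂ) * Complex.exp (-(Complex.I * (φv j : ℂ))) := by
        rw [show (star ((q j : ℂ) * Complex.exp (Complex.I * (φv j : ℂ))))
            = (starRingEnd ℂ) ((q j : ℂ) * Complex.exp (Complex.I * (φv j : ℂ))) from rfl,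
          RingHom.map_mul, ← Complex.exp_conj, Complex.conj_ofReal]
        congr 2
        simp [Complex.ext_iff]
      rw [hst, he]
      simp only
      rw [mul_assoc, ← Complex.exp_add,
        show -(Complex.I * (φv j : ℂ)) + Complex.I * (φ j : ℂ)
          = Complex.I * ((φ j : ℂ) - (φv j : ℂ)) by ring]
    have hC : (∑ j, (y j * (starRingEnd ℂ) (m j)).re) = ∑ j, q j * Real.cos (φ j - φv j) := by
      have h1 : (∑ j, y j * (starRingEnd ℂ) (m j)) = (starRingEnd ℂ) (star y ⬝ᵥ m) := by
        simp only [dotProduct, map_sum, Pi.star_apply]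
        refine Finset.sum_congr rfl fun j _ => ?_
        rw [RingHom.map_mul]
        simp [mul_comm]
      have h2 : (∑ j, (y j * (starRingEnd ℂ) (m j)).re)
          = (∑ j, y j * (starRingEnd ℂ) (m j)).re := by
        rw [Complex.re_sum]
      rw [h2, h1, Complex.conj_re, hd, hdv, Complex.re_sum]
      refine Finset.sum_congr rfl fun j _ => ?_
      have : Complex.I * ((φ j : ℂ) - (φv j : ℂ)) = ((φ j - φv j : ℝ) : ℂ) * Complex.I := by
        push_cast; ring
      rw [this, Complex.re_ofReal_mul, Complex.exp_ofReal_mul_I_re]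
    calc (∑ j, ‖y j - m j‖ ^ 2)
        = ∑ j, (Complex.normSq (y j) + Complex.normSq (m j)
            - 2 * (y j * (starRingEnd ℂ) (m j)).re) := by
          refine Finset.sum_congr rfl fun j _ => ?_
          rw [Complex.sq_norm, Complex.normSq_sub]
      _ = (∑ j, Complex.normSq (y j)) + (∑ j, Complex.normSq (m j))
            - 2 * ∑ j, (y j * (starRingEnd ℂ) (m j)).re := by
          rw [Finset.sum_sub_distrib, Finset.sum_add_distrib, Finset.mul_sum]
      _ = ((∑ j, g j ^ 2) + ∑ j, ‖y j‖ ^ 2)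
            - 2 * ∑ j, q j * Real.cos (φ j - φv j) := by
          rw [hB, hC]
          simp_rw [Complex.sq_norm]
          ring
  -- part 1, for all φ
  have hpart1 : ∀ φ : Fin n → ℝ,
      Real.exp (-(1 / σ ^ 2) *
          ∑ j, ‖y j - F₂.mulVec (fun i => Complex.exp (Complex.I * (φ i : ℂ))) j‖ ^ 2)
        = Real.exp (-(1 / σ ^ 2) * ((∑ j, g j ^ 2) + ∑ j, ‖y j‖ ^ 2)) *
          ∏ j, Real.exp ((2 * q j / σ ^ 2) * Real.cos (φ j - φv j)) := by
    intro φ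
    rw [key φ, ← Real.exp_sum, ← Real.exp_add]
    congr 1
    rw [show (∑ j, (2 * q j / σ^2) * Real.cos (φ j - φv j))
        = (2/σ^2) * ∑ j, q j * Real.cos (φ j - φv j) by
      rw [Finset.mul_sum]; exact Finset.sum_congr rfl fun j _ => by ring]
    ring
  -- the normalizing constant
  set C : ℝ := Real.exp (-(1 / σ ^ 2) * ((∑ j, g j ^ 2) + ∑ j, ‖y j‖ ^ 2)) with hCdef
  set f : Fin n → ℝ → ℝ := fun j x => Real.exp ((2 * q j / σ ^ 2) * Real.cos (x - φv j)) with hfdef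
  have hSmeas : MeasurableSet (Set.univ.pi (fun _ : Fin n => Set.Ico (-Real.pi) Real.pi)) :=
    MeasurableSet.univ_pi fun _ => measurableSet_Ico
  have hden : (∫ ψ in Set.univ.pi (fun _ : Fin n => Set.Ico (-Real.pi) Real.pi),
      Real.exp (-(1 / σ ^ 2) *
        ∑ j, ‖y j - F₂.mulVec (fun i => Complex.exp (Complex.I * (ψ i : ℂ))) j‖ ^ 2))
      = C * ∏ j, (2 * Real.pi * besselI0 (2 * q j / σ ^ 2)) := by
    have step1 : (∫ ψ in Set.univ.pi (fun _ : Fin n => Set.Ico (-Real.pi) Real.pi),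
        Real.exp (-(1 / σ ^ 2) *
          ∑ j, ‖y j - F₂.mulVec (fun i => Complex.exp (Complex.I * (ψ i : ℂ))) j‖ ^ 2))
        = ∫ ψ in Set.univ.pi (fun _ : Fin n => Set.Ico (-Real.pi) Real.pi),
            C * ∏ j, f j (ψ j) := by
      refine integral_congr_ae (Filter.Eventually.of_forall fun ψ => ?_)
      exact hpart1 ψ
    rw [step1, MeasureTheory.integral_const_mul]
    congr 1
    rw [← MeasureTheory.integral_indicator hSmeas]
    have hind : (Set.univ.pi (fun _ : Fin n => Set.Ico (-Real.pi) Real.pi)).indicator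
        (fun ψ => ∏ j, f j (ψ j))
        = fun ψ => ∏ j, (Set.Ico (-Real.pi) Real.pi).indicator (f j) (ψ j) := by
      funext ψ
      by_cases h : ψ ∈ Set.univ.pi (fun _ : Fin n => Set.Ico (-Real.pi) Real.pi)
      · rw [Set.indicator_of_mem h]
        refine Finset.prod_congr rfl fun j _ => ?_
        rw [Set.indicator_of_mem (h j (Set.mem_univ j))]
      · rw [Set.indicator_of_notMem h]
        obtain ⟨j, hj⟩ : ∃ j, ψ j ∉ Set.Ico (-Real.pi) Real.pi := by
          simpa [Set.mem_univ_pi] using h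
        rw [eq_comm]
        refine Finset.prod_eq_zero (Finset.mem_univ j) ?_
        rw [Set.indicator_of_notMem hj]
    rw [hind,
      MeasureTheory.integral_fintype_prod_volume_eq_prod (ι := Fin n)
        (fun j => (Set.Ico (-Real.pi) Real.pi).indicator (f j))]
    refine Finset.prod_congr rfl fun j _ => ?_
    rw [MeasureTheory.integral_indicator measurableSet_Ico]
    exact integral_Ico_vm (2 * q j / σ ^ 2) (φv j)
  intro φ hφ
  refine ⟨hpart1 φ, ?_⟩
  rw [hpart1 φ, hden]
  have hCpos : 0 < C := Real.exp_pos _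
  rw [mul_div_mul_left _ _ hCpos.ne', ← Finset.prod_div_distrib]
  refine Finset.prod_congr rfl fun j _ => ?_
  rfl
end
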